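/- arXiv:0909.2817 — 7 statements merged into one kernel-verified Lean document; each statement's English description precedes it below -/
import Mathlib

section
/- In the Boolean lattice B_n, any recovering set R satisfies |R| ≤ √3 · 2^{0.4392 n}. -/
/-- `R` is a recovering set in the Boolean lattice `B_n`. -/
def IsRecovering {n : ℕ} (R : Finset (Finset (Fin n))) : Prop :=
  (∀ a1 ∈ R, ∀ a2 ∈ R, ∀ a3 ∈ R, ∀ a4 ∈ R,
    a1 ≠ a2 → a1 ≠ a3 → a1 ≠ a4 → a2 ≠ a3 → a2 ≠ a4 → a3 ≠ a4 →
      a1 ∩ a2 ≠ a3 ∩ a4 ∧ a1 ∪ a2 ≠ a3 ∪ a4) ∧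
  (∀ a1 ∈ R, ∀ a2 ∈ R, ∀ a3 ∈ R, a1 ≠ a2 → a1 ≠ a3 → a2 ≠ a3 →
      a1 ∩ a2 ≠ a1 ∩ a3 ∧ a1 ∪ a2 ≠ a1 ∪ a3)

open Finset

namespace RecAux

lemma big1 : (2:ℕ)^336 ≤ 9^9 * 55^55 := Nat.le_of_ble_eq_true rfl
set_option maxRecDepth 100000 in
lemma big2 : (2:ℕ)^3136 ≤ 49^49 * 207^207 * 25^100 * 39^156 := Nat.le_of_ble_eq_true rfl
set_option maxRecDepth 100000 in
lemma big3 : (2:ℕ)^2112 ≤ 3^192 * 81^81 * 175^175 := Nat.le_of_ble_eq_true rfl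

lemma le_mul_self (k : ℕ) : k ≤ k * k := by nlinarith

/-! ### Per-coordinate nat inequalities -/

lemma natB {D c e : ℕ} (hce : c + e = D) (h : 64*c ≤ 9*D) :
    2^(336*D) ≤ 9^(64*c) * 55^(64*e) := by
  have he : 64*e = (9*D - 64*c) + 55*D := by omega
  have h9 : 64*c + (9*D - 64*c) = 9*D := by omega
  calc 2^(336*D) = (2^336)^D := by rw [pow_mul]
    _ ≤ (9^9*55^55)^D := Nat.pow_le_pow_left big1 D
    _ = 9^(9*D) * 55^(55*D) := by rw [mul_pow, ← pow_mul, ← pow_mul]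
    _ = 9^(64*c) * (9^(9*D-64*c) * 55^(55*D)) := by rw [← mul_assoc, ← pow_add, h9]
    _ ≤ 9^(64*c) * (55^(9*D-64*c) * 55^(55*D)) := by
        have := Nat.pow_le_pow_left (show (9:ℕ) ≤ 55 by norm_num) (9*D-64*c)
        exact Nat.mul_le_mul_left _ (Nat.mul_le_mul_right _ this)
    _ = 9^(64*c) * 55^(64*e) := by rw [← pow_add, ← he]

lemma natC {D c e d f : ℕ} (hce : c + e = D) (hdf : d + f = D)
    (hc : 256*c ≤ 49*D) (hd : 64*d ≤ 25*D) :
    2^(784*D) ≤ 49^(64*c) * 207^(64*e) * 25^(64*d) * 39^(64*f) := by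
  rw [← Nat.pow_le_pow_iff_left (n := 4) (by norm_num)]
  have e1 : (2^(784*D))^4 = 2^(3136*D) := by rw [← pow_mul]; ring_nf
  have e2 : (49^(64*c) * 207^(64*e) * 25^(64*d) * 39^(64*f))^4
      = 49^(256*c) * 207^(256*e) * 25^(256*d) * 39^(256*f) := by
    rw [mul_pow, mul_pow, mul_pow, ← pow_mul, ← pow_mul, ← pow_mul, ← pow_mul]
    ring_nf
  rw [e1, e2]
  obtain ⟨t, ht⟩ : ∃ t, 256*c + t = 49*D := ⟨49*D - 256*c, by omega⟩
  obtain ⟨u, hu⟩ : ∃ u, 256*d + u = 100*D := ⟨100*D - 256*d, by omega⟩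
  have he : 256*e = t + 207*D := by omega
  have hf : 256*f = u + 156*D := by omega
  calc 2^(3136*D) = (2^3136)^D := by rw [pow_mul]
    _ ≤ (49^49 * 207^207 * 25^100 * 39^156)^D := Nat.pow_le_pow_left big2 D
    _ = 49^(49*D) * 207^(207*D) * 25^(100*D) * 39^(156*D) := by
        rw [mul_pow, mul_pow, mul_pow, ← pow_mul, ← pow_mul, ← pow_mul, ← pow_mul]
    _ = 49^(256*c) * (49^t * 207^(207*D)) * (25^(256*d) * (25^u * 39^(156*D))) := by
        rw [← ht, ← hu, pow_add, pow_add]; ring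
    _ ≤ 49^(256*c) * (207^t * 207^(207*D)) * (25^(256*d) * (39^u * 39^(156*D))) := by
        have t1 := Nat.pow_le_pow_left (show (49:ℕ) ≤ 207 by norm_num) t
        have t2 := Nat.pow_le_pow_left (show (25:ℕ) ≤ 39 by norm_num) u
        gcongr
    _ = 49^(256*c) * 207^(256*e) * 25^(256*d) * 39^(256*f) := by
        rw [he, hf, pow_add, pow_add]; ring

lemma natD {D c e d f : ℕ} (hce : c + e = D) (hdf : d + f = D)
    (hc : 256*c ≤ 64*D) (hd : 256*d ≤ 81*D) :
    2^(528*D) ≤ 3^(64*e) * 81^(64*d) * 175^(64*f) := by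
  rw [← Nat.pow_le_pow_iff_left (n := 4) (by norm_num)]
  have e1 : (2^(528*D))^4 = 2^(2112*D) := by rw [← pow_mul]; ring_nf
  have e2 : (3^(64*e) * 81^(64*d) * 175^(64*f))^4
      = 3^(256*e) * 81^(256*d) * 175^(256*f) := by
    rw [mul_pow, mul_pow, ← pow_mul, ← pow_mul, ← pow_mul]; ring_nf
  rw [e1, e2]
  obtain ⟨u, hu⟩ : ∃ u, 256*d + u = 81*D := ⟨81*D - 256*d, by omega⟩
  have hf : 256*f = u + 175*D := by omega
  have he : 192*D ≤ 256*e := by omega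
  calc 2^(2112*D) = (2^2112)^D := by rw [pow_mul]
    _ ≤ (3^192 * 81^81 * 175^175)^D := Nat.pow_le_pow_left big3 D
    _ = 3^(192*D) * 81^(81*D) * 175^(175*D) := by
        rw [mul_pow, mul_pow, ← pow_mul, ← pow_mul, ← pow_mul]
    _ = 3^(192*D) * (81^(256*d) * (81^u * 175^(175*D))) := by
        rw [← hu, pow_add]; ring
    _ ≤ 3^(256*e) * (81^(256*d) * (175^u * 175^(175*D))) := by
        have t1 := Nat.pow_le_pow_right (show 1 ≤ 3 by norm_num) he
        have t2 := Nat.pow_le_pow_left (show (81:ℕ) ≤ 175 by norm_num) u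
        gcongr
    _ = 3^(256*e) * 81^(256*d) * 175^(256*f) := by
        rw [hf, pow_add]; ring


/-- In case C, the join-side density is bounded. -/
lemma dC {D c d m : ℕ} (hD : 1 ≤ D) (hsum : c + d + 2*m = D) (hcd : c*d ≤ m*m)
    (h9 : 9*D ≤ 64*c) : 64*d ≤ 25*D := by
  by_contra hcon
  push_neg at hcon
  have hc1 : 1 ≤ c := by omega
  have hT : 25*c + 50*m + 1 ≤ 39*d := by omega
  have hm : 3*m + 1 ≤ 5*c := by omega
  have P2a : c*(25*c + 50*m + 1) ≤ c*(39*d) := Nat.mul_le_mul_left c hT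
  have P2b : c*(39*d) = 39*(c*d) := by ring
  have P2 : 25*(c*c) + 50*(c*m) + c ≤ 39*(m*m) := by
    calc 25*(c*c) + 50*(c*m) + c = c*(25*c + 50*m + 1) := by ring
      _ ≤ c*(39*d) := P2a
      _ = 39*(c*d) := P2b
      _ ≤ 39*(m*m) := Nat.mul_le_mul_left 39 hcd
  have P3 : 39*(m*m) + 13*m ≤ 65*(c*m) := by
    calc 39*(m*m) + 13*m = 13*m*(3*m+1) := by ring
      _ ≤ 13*m*(5*c) := Nat.mul_le_mul_left _ hm
      _ = 65*(c*m) := by ring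
  have P4 : 15*(c*m) + 5*c ≤ 25*(c*c) := by
    calc 15*(c*m) + 5*c = 5*c*(3*m+1) := by ring
      _ ≤ 5*c*(5*c) := Nat.mul_le_mul_left _ hm
      _ = 25*(c*c) := by ring
  omega

/-- In case D, the join-side density is bounded. -/
lemma dD {D c d m : ℕ} (hD : 1 ≤ D) (hsum : c + d + 2*m = D) (hcd : c*d ≤ m*m)
    (h49 : 49*D ≤ 256*c) : 256*d ≤ 81*D := by
  by_contra hcon
  push_neg at hcon
  have hc1 : 1 ≤ c := by omega
  have hT : 81*c + 162*m + 1 ≤ 175*d := by omega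
  have hm : 7*m + 1 ≤ 9*c := by omega
  have P2 : 81*(c*c) + 162*(c*m) + c ≤ 175*(m*m) := by
    calc 81*(c*c) + 162*(c*m) + c = c*(81*c + 162*m + 1) := by ring
      _ ≤ c*(175*d) := Nat.mul_le_mul_left c hT
      _ = 175*(c*d) := by ring
      _ ≤ 175*(m*m) := Nat.mul_le_mul_left 175 hcd
  have P3 : 175*(m*m) + 25*m ≤ 225*(c*m) := by
    calc 175*(m*m) + 25*m = 25*m*(7*m+1) := by ring
      _ ≤ 25*m*(9*c) := Nat.mul_le_mul_left _ hm
      _ = 225*(c*m) := by ring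
  have P4 : 63*(c*m) + 9*c ≤ 81*(c*c) := by
    calc 63*(c*m) + 9*c = 9*c*(7*m+1) := by ring
      _ ≤ 9*c*(9*c) := Nat.mul_le_mul_left _ hm
      _ = 81*(c*c) := by ring
  omega

lemma c_le_m {c d m : ℕ} (hle : c ≤ d) (hcd : c*d ≤ m*m) : c ≤ m := by
  by_contra hcon
  push_neg at hcon
  have : m*m < c*c := Nat.mul_lt_mul_of_lt_of_lt hcon hcon
  have : c*c ≤ c*d := Nat.mul_le_mul_left c hle
  omega


lemma master_of_nat {D c e d f k j : ℕ} {a b a' b' : ℕ}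
    (hce : c + e = D) (hdf : d + f = D)
    (hkey : 2^((64*(k+j)-112)*D) ≤ a^(64*c) * b^(64*e) * a'^(64*d) * b'^(64*f))
    (hkj : 112 ≤ 64*(k+j)) :
    1 ≤ 2^(112*D) * (((a:ℝ)/2^k)^c * ((b:ℝ)/2^k)^e * ((a':ℝ)/2^j)^d * ((b':ℝ)/2^j)^f)^64 := by
  have hXnum : ((a:ℝ)/2^k)^c * ((b:ℝ)/2^k)^e * ((a':ℝ)/2^j)^d * ((b':ℝ)/2^j)^f
      = ((a:ℝ)^c * b^e * a'^d * b'^f) / 2^((k+j)*D) := by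
    rw [div_pow, div_pow, div_pow, div_pow, ← pow_mul, ← pow_mul, ← pow_mul, ← pow_mul]
    rw [div_mul_div_comm, div_mul_div_comm, div_mul_div_comm,
      ← pow_add, ← pow_add, ← pow_add]
    congr 2
    rw [show k*c + k*e + j*d + j*f = k*(c+e) + j*(d+f) from by ring, hce, hdf, ← Nat.add_mul]
  rw [hXnum, div_pow, ← pow_mul]
  have hnum64 : (((a:ℝ)^c * b^e * a'^d * b'^f))^64
      = (a:ℝ)^(64*c) * b^(64*e) * a'^(64*d) * b'^(64*f) := by
    rw [mul_pow, mul_pow, mul_pow, ← pow_mul, ← pow_mul, ← pow_mul, ← pow_mul]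
    ring_nf
  rw [hnum64]
  rw [mul_div_assoc']
  rw [le_div_iff₀ (by positivity), one_mul]
  have hsplit : (2:ℝ)^((k+j)*D*64) = 2^(112*D) * 2^((64*(k+j)-112)*D) := by
    rw [← pow_add]
    congr 1
    rw [← Nat.add_mul, show 112 + (64*(k+j)-112) = 64*(k+j) from by omega]
    ring
  rw [hsplit]
  have hc : ((2:ℕ)^((64*(k+j)-112)*D) : ℝ)
      ≤ ((a^(64*c) * b^(64*e) * a'^(64*d) * b'^(64*f) : ℕ) : ℝ) := by exact_mod_cast hkey
  push_cast at hc
  exact mul_le_mul_of_nonneg_left hc (by positivity)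


lemma PCcore {D c e d f m : ℕ} (hD : 1 ≤ D) (hce : c + e = D) (hdf : d + f = D)
    (hsum : c + d + 2*m = D) (hcd : c*d ≤ m*m) (hord : c ≤ d) :
    ∃ β γ : ℝ, 0 < β ∧ β < 1 ∧ 0 < γ ∧ γ < 1 ∧
      1 ≤ 2^(112*D) * (β^c * (1-β)^e * γ^d * (1-γ)^f)^64 := by
  rcases le_or_gt (64*c) (9*D) with hB | hB
  · -- case B
    refine ⟨(9:ℝ)/2^6, (1:ℝ)/2^1, by norm_num, by norm_num, by norm_num, by norm_num, ?_⟩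
    have h1 : (1:ℝ) - (9:ℝ)/2^6 = (55:ℝ)/2^6 := by norm_num
    have h2 : (1:ℝ) - (1:ℝ)/2^1 = (1:ℝ)/2^1 := by norm_num
    rw [h1, h2]
    have key : 2^((64*(6+1)-112)*D) ≤ 9^(64*c) * 55^(64*e) * 1^(64*d) * 1^(64*f) := by
      simpa using natB hce hB
    have := master_of_nat (a := 9) (b := 55) (a' := 1) (b' := 1) (k := 6) (j := 1)
      hce hdf key (by norm_num)
    exact_mod_cast this
  rcases le_or_gt (256*c) (49*D) with hC | hC
  · -- case C
    have hd25 : 64*d ≤ 25*D := dC hD hsum hcd (le_of_lt hB)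
    refine ⟨(49:ℝ)/2^8, (25:ℝ)/2^6, by norm_num, by norm_num, by norm_num, by norm_num, ?_⟩
    have h1 : (1:ℝ) - (49:ℝ)/2^8 = (207:ℝ)/2^8 := by norm_num
    have h2 : (1:ℝ) - (25:ℝ)/2^6 = (39:ℝ)/2^6 := by norm_num
    rw [h1, h2]
    have key : 2^((64*(8+6)-112)*D) ≤ 49^(64*c) * 207^(64*e) * 25^(64*d) * 39^(64*f) := by
      simpa using natC hce hdf hC hd25
    have := master_of_nat (a := 49) (b := 207) (a' := 25) (b' := 39) (k := 8) (j := 6)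
      hce hdf key (by norm_num)
    exact_mod_cast this
  · -- case D
    have h49 : 49*D ≤ 256*c := le_of_lt hC
    have hd81 : 256*d ≤ 81*D := dD hD hsum hcd h49
    have hcm : c ≤ m := c_le_m hord hcd
    have hc64 : 256*c ≤ 64*D := by omega
    refine ⟨(1:ℝ)/2^2, (81:ℝ)/2^8, by norm_num, by norm_num, by norm_num, by norm_num, ?_⟩
    have h1 : (1:ℝ) - (1:ℝ)/2^2 = (3:ℝ)/2^2 := by norm_num
    have h2 : (1:ℝ) - (81:ℝ)/2^8 = (175:ℝ)/2^8 := by norm_num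
    rw [h1, h2]
    have key : 2^((64*(2+8)-112)*D) ≤ 1^(64*c) * 3^(64*e) * 81^(64*d) * 175^(64*f) := by
      have := natD hce hdf hc64 hd81
      simpa [mul_assoc] using this
    have := master_of_nat (a := 1) (b := 3) (a' := 81) (b' := 175) (k := 2) (j := 8)
      hce hdf key (by norm_num)
    exact_mod_cast this

lemma PC {D c e d f m : ℕ} (hD : 1 ≤ D) (hce : c + e = D) (hdf : d + f = D)
    (hsum : c + d + 2*m = D) (hcd : c*d ≤ m*m) :
    ∃ β γ : ℝ, 0 < β ∧ β < 1 ∧ 0 < γ ∧ γ < 1 ∧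
      1 ≤ 2^(112*D) * (β^c * (1-β)^e * γ^d * (1-γ)^f)^64 := by
  rcases le_total c d with hord | hord
  · exact PCcore hD hce hdf hsum hcd hord
  · obtain ⟨β, γ, hb1, hb2, hg1, hg2, hkey⟩ :=
      PCcore (c := d) (e := f) (d := c) (f := e) (m := m) hD hdf hce (by omega)
        (by rwa [Nat.mul_comm] at hcd) hord
    refine ⟨γ, β, hg1, hg2, hb1, hb2, ?_⟩
    have : γ^c * (1-γ)^e * β^d * (1-β)^f = β^d * (1-β)^f * γ^c * (1-γ)^e := by ring
    rw [this]
    exact hkey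


variable {n : ℕ} {R : Finset (Finset (Fin n))}

lemma meet_eq (hR : IsRecovering R) {a b c d : Finset (Fin n)}
    (ha : a ∈ R) (hb : b ∈ R) (hc : c ∈ R) (hd : d ∈ R)
    (hab : a ≠ b) (hcd : c ≠ d) (h : a ∩ b = c ∩ d) :
    (a = c ∧ b = d) ∨ (a = d ∧ b = c) := by
  by_cases hac : a = c
  · subst hac
    by_cases hbd : b = d
    · exact Or.inl ⟨rfl, hbd⟩
    · exact absurd h ((hR.2 a ha b hb d hd hab hcd hbd).1)
  · by_cases had : a = d
    · subst had
      by_cases hbc : b = c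
      · exact Or.inr ⟨rfl, hbc⟩
      · have h' : a ∩ b = a ∩ c := by rw [h, inter_comm]
        exact absurd h' ((hR.2 a ha b hb c hc hab hac hbc).1)
    · by_cases hbc : b = c
      · subst hbc
        have h' : b ∩ a = b ∩ d := by rw [inter_comm, h]
        exact absurd h' ((hR.2 b hb a ha d hd (Ne.symm hab) hcd had).1)
      · by_cases hbd : b = d
        · subst hbd
          have h' : b ∩ a = b ∩ c := by rw [inter_comm b a, h, inter_comm]
          exact absurd h' ((hR.2 b hb a ha c hc (Ne.symm hab) (Ne.symm hcd) hac).1)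
        · exact absurd h ((hR.1 a ha b hb c hc d hd hab hac had hbc hbd hcd).1)

lemma join_eq (hR : IsRecovering R) {a b c d : Finset (Fin n)}
    (ha : a ∈ R) (hb : b ∈ R) (hc : c ∈ R) (hd : d ∈ R)
    (hab : a ≠ b) (hcd : c ≠ d) (h : a ∪ b = c ∪ d) :
    (a = c ∧ b = d) ∨ (a = d ∧ b = c) := by
  by_cases hac : a = c
  · subst hac
    by_cases hbd : b = d
    · exact Or.inl ⟨rfl, hbd⟩
    · exact absurd h ((hR.2 a ha b hb d hd hab hcd hbd).2)
  · by_cases had : a = d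
    · subst had
      by_cases hbc : b = c
      · exact Or.inr ⟨rfl, hbc⟩
      · have h' : a ∪ b = a ∪ c := by rw [h, union_comm]
        exact absurd h' ((hR.2 a ha b hb c hc hab hac hbc).2)
    · by_cases hbc : b = c
      · subst hbc
        have h' : b ∪ a = b ∪ d := by rw [union_comm, h]
        exact absurd h' ((hR.2 b hb a ha d hd (Ne.symm hab) hcd had).2)
      · by_cases hbd : b = d
        · subst hbd
          have h' : b ∪ a = b ∪ c := by rw [union_comm b a, h, union_comm]
          exact absurd h' ((hR.2 b hb a ha c hc (Ne.symm hab) (Ne.symm hcd) hac).2)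
        · exact absurd h ((hR.1 a ha b hb c hc d hd hab hac had hbc hbd hcd).2)

lemma fiber_le_two_meet (hR : IsRecovering R) (m0 : Finset (Fin n)) :
    (R.offDiag.filter (fun p => p.1 ∩ p.2 = m0)).card ≤ 2 := by
  rcases (R.offDiag.filter (fun p => p.1 ∩ p.2 = m0)).eq_empty_or_nonempty with hF | ⟨p0, hp0⟩
  · simp [hF]
  · have hsub : (R.offDiag.filter (fun p => p.1 ∩ p.2 = m0))
        ⊆ {(p0.1, p0.2), (p0.2, p0.1)} := by
      intro q hq
      simp only [mem_filter, mem_offDiag] at hq hp0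
      obtain ⟨⟨hq1, hq2, hq12⟩, hqm⟩ := hq
      obtain ⟨⟨hp1, hp2, hp12⟩, hpm⟩ := hp0
      rcases meet_eq hR hq1 hq2 hp1 hp2 hq12 hp12 (by rw [hqm, hpm]) with ⟨h1, h2⟩ | ⟨h1, h2⟩
      · simp only [mem_insert, mem_singleton]
        exact Or.inl (Prod.ext h1 h2)
      · simp only [mem_insert, mem_singleton]
        exact Or.inr (Prod.ext h1 h2)
    calc (R.offDiag.filter (fun p => p.1 ∩ p.2 = m0)).card
        ≤ ({(p0.1, p0.2), (p0.2, p0.1)} : Finset _).card := card_le_card hsub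
      _ ≤ 2 := (card_insert_le _ _).trans (by simp)

lemma fiber_le_two_join (hR : IsRecovering R) (m0 : Finset (Fin n)) :
    (R.offDiag.filter (fun p => p.1 ∪ p.2 = m0)).card ≤ 2 := by
  rcases (R.offDiag.filter (fun p => p.1 ∪ p.2 = m0)).eq_empty_or_nonempty with hF | ⟨p0, hp0⟩
  · simp [hF]
  · have hsub : (R.offDiag.filter (fun p => p.1 ∪ p.2 = m0))
        ⊆ {(p0.1, p0.2), (p0.2, p0.1)} := by
      intro q hq
      simp only [mem_filter, mem_offDiag] at hq hp0
      obtain ⟨⟨hq1, hq2, hq12⟩, hqm⟩ := hq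
      obtain ⟨⟨hp1, hp2, hp12⟩, hpm⟩ := hp0
      rcases join_eq hR hq1 hq2 hp1 hp2 hq12 hp12 (by rw [hqm, hpm]) with ⟨h1, h2⟩ | ⟨h1, h2⟩
      · simp only [mem_insert, mem_singleton]
        exact Or.inl (Prod.ext h1 h2)
      · simp only [mem_insert, mem_singleton]
        exact Or.inr (Prod.ext h1 h2)
    calc (R.offDiag.filter (fun p => p.1 ∪ p.2 = m0)).card
        ≤ ({(p0.1, p0.2), (p0.2, p0.1)} : Finset _).card := card_le_card hsub
      _ ≤ 2 := (card_insert_le _ _).trans (by simp)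

lemma sum_comp_le {α κ : Type*} [DecidableEq α] [DecidableEq κ] [Fintype κ] (S : Finset α)
    (M : α → κ) (g : κ → ℝ)
    (hg : ∀ k, 0 ≤ g k) (hfib : ∀ k : κ, (S.filter (fun p => M p = k)).card ≤ 2) :
    ∑ p ∈ S, g (M p) ≤ 2 * ∑ k, g k := by
  rw [← Finset.sum_fiberwise_of_maps_to (t := (univ : Finset κ))
    (fun p _ => mem_univ (M p)) (fun p => g (M p))]
  rw [Finset.mul_sum]
  apply Finset.sum_le_sum
  intro k _
  have h1 : ∑ p ∈ S.filter (fun p => M p = k), g (M p)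
      = ((S.filter (fun p => M p = k)).card : ℕ) • g k := by
    rw [← Finset.sum_const]
    exact Finset.sum_congr rfl (fun p hp => by rw [(Finset.mem_filter.mp hp).2])
  rw [h1, nsmul_eq_mul]
  exact mul_le_mul_of_nonneg_right (by exact_mod_cast hfib k) (hg k)

lemma sum_weights (u v : Fin n → ℝ) (huv : ∀ i, u i + v i = 1) :
    ∑ s : Finset (Fin n), ∏ i, (if i ∈ s then u i else v i) = 1 := by
  have key := Finset.prod_add u v (univ : Finset (Fin n))
  have h1 : ∏ i, (u i + v i) = 1 := by simp [huv]
  rw [h1, Finset.powerset_univ] at key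
  rw [key]
  apply Finset.sum_congr rfl
  intro s _
  rw [Finset.prod_ite (fun i => u i) (fun i => v i)]
  congr 1
  · apply Finset.prod_congr _ (fun _ _ => rfl)
    ext i; simp
  · apply Finset.prod_congr _ (fun _ _ => rfl)
    ext i; simp

lemma prod_weights {α : Type*} [DecidableEq α] (S : Finset α) (M : α → Finset (Fin n))
    (u v : Fin n → ℝ) :
    ∏ p ∈ S, ∏ i, (if i ∈ M p then u i else v i)
    = ∏ i, (u i)^((S.filter (fun p => i ∈ M p)).card)
        * (v i)^((S.filter (fun p => i ∉ M p)).card) := by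
  rw [Finset.prod_comm]
  apply Finset.prod_congr rfl
  intro i _
  rw [Finset.prod_ite (fun _ => u i) (fun _ => v i)]
  simp [Finset.prod_const]

lemma prod_le_of_sum_le {α : Type*} (S : Finset α) (hS : S.Nonempty) (z : α → ℝ)
    (hz : ∀ p ∈ S, 0 ≤ z p) (h : ∑ p ∈ S, z p ≤ 2) :
    ∏ p ∈ S, z p ≤ (2 / S.card)^(S.card) := by
  have hc0 : 0 < (S.card : ℝ) := by
    exact_mod_cast card_pos.mpr hS
  have gm := Real.geom_mean_le_arith_mean_weighted S (fun _ => (S.card:ℝ)⁻¹) z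
    (fun i _ => by positivity)
    (by rw [Finset.sum_const, nsmul_eq_mul]; field_simp) hz
  rw [Real.finset_prod_rpow S z hz] at gm
  have h2 : (∏ p ∈ S, z p) ^ ((S.card:ℝ)⁻¹) ≤ 2 / S.card := by
    refine gm.trans ?_
    rw [← Finset.mul_sum]
    calc (S.card:ℝ)⁻¹ * ∑ p ∈ S, z p ≤ (S.card:ℝ)⁻¹ * 2 := by
          exact mul_le_mul_of_nonneg_left h (by positivity)
      _ = 2 / S.card := by rw [inv_mul_eq_div]
  have h3 := pow_le_pow_left₀ (Real.rpow_nonneg (Finset.prod_nonneg hz) _) h2 S.card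
  rwa [Real.rpow_inv_natCast_pow (Finset.prod_nonneg hz)
    (by exact_mod_cast hc0.ne' : S.card ≠ 0)] at h3

lemma filter_meet_eq (R : Finset (Finset (Fin n))) (i : Fin n) :
    R.offDiag.filter (fun p => i ∈ p.1 ∩ p.2) = (R.filter (fun a => i ∈ a)).offDiag := by
  ext p
  simp only [mem_filter, mem_offDiag, mem_inter]
  constructor
  · rintro ⟨⟨h1, h2, h3⟩, h4, h5⟩
    exact ⟨⟨h1, h4⟩, ⟨h2, h5⟩, h3⟩
  · rintro ⟨⟨h1, h4⟩, ⟨h2, h5⟩, h3⟩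
    exact ⟨⟨h1, h2, h3⟩, h4, h5⟩

lemma filter_join_eq (R : Finset (Finset (Fin n))) (i : Fin n) :
    R.offDiag.filter (fun p => i ∉ p.1 ∪ p.2) = (R.filter (fun a => i ∉ a)).offDiag := by
  ext p
  simp only [mem_filter, mem_offDiag, mem_union, not_or]
  constructor
  · rintro ⟨⟨h1, h2, h3⟩, h4, h5⟩
    exact ⟨⟨h1, h4⟩, ⟨h2, h5⟩, h3⟩
  · rintro ⟨⟨h1, h4⟩, ⟨h2, h5⟩, h3⟩
    exact ⟨⟨h1, h2, h3⟩, h4, h5⟩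


lemma machine (hR : IsRecovering R) (hN : 2 ≤ R.card) :
    ((R.offDiag.card : ℝ))^128 ≤ 2^(112*n+128) := by
  classical
  set S := R.offDiag with hSdef
  set D := S.card with hDdef
  have hSne : S.Nonempty := by
    obtain ⟨a, ha, b, hb, hab⟩ := Finset.one_lt_card.mp (lt_of_lt_of_le one_lt_two hN)
    exact ⟨(a, b), by rw [hSdef]; exact Finset.mem_offDiag.mpr ⟨ha, hb, hab⟩⟩
  have hD1 : 1 ≤ D := card_pos.mpr hSne
  -- per-coordinate counts
  set cc : Fin n → ℕ := fun i => (S.filter (fun p => i ∈ p.1 ∩ p.2)).card with hccdef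
  set ee : Fin n → ℕ := fun i => (S.filter (fun p => ¬ i ∈ p.1 ∩ p.2)).card with heedef
  set dd : Fin n → ℕ := fun i => (S.filter (fun p => i ∉ p.1 ∪ p.2)).card with hdddef
  set ff : Fin n → ℕ := fun i => (S.filter (fun p => ¬ i ∉ p.1 ∪ p.2)).card with hffdef
  have hce : ∀ i, cc i + ee i = D :=
    fun i => Finset.card_filter_add_card_filter_not _
  have hdf : ∀ i, dd i + ff i = D :=
    fun i => Finset.card_filter_add_card_filter_not _
  set K : Fin n → ℕ := fun i => (R.filter (fun a => i ∈ a)).card with hKdef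
  set L : Fin n → ℕ := fun i => (R.filter (fun a => i ∉ a)).card with hLdef
  have hKL : ∀ i, K i + L i = R.card :=
    fun i => Finset.card_filter_add_card_filter_not _
  have hcc : ∀ i, cc i = K i * K i - K i := by
    intro i
    rw [hccdef]
    simp only
    rw [hSdef, filter_meet_eq, offDiag_card]
  have hdd : ∀ i, dd i = L i * L i - L i := by
    intro i
    rw [hdddef]
    simp only
    rw [hSdef, filter_join_eq, offDiag_card]
  have hDval : D = R.card * R.card - R.card := by rw [hDdef, hSdef, offDiag_card]
  have hsum : ∀ i, cc i + dd i + 2*(K i * L i) = D := by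
    intro i
    rw [hcc i, hdd i, hDval, ← hKL i]
    have a1 : K i ≤ K i * K i := le_mul_self _
    have a2 : L i ≤ L i * L i := le_mul_self _
    have a3 : K i + L i ≤ (K i + L i) * (K i + L i) := le_mul_self _
    zify [a1, a2, a3]
    ring
  have hcd : ∀ i, cc i * dd i ≤ (K i * L i) * (K i * L i) := by
    intro i
    rw [hcc i, hdd i]
    calc (K i * K i - K i) * (L i * L i - L i) ≤ (K i * K i) * (L i * L i) :=
          Nat.mul_le_mul (Nat.sub_le _ _) (Nat.sub_le _ _)
      _ = (K i * L i) * (K i * L i) := by ring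
  -- choose weights
  have hPC : ∀ i : Fin n, ∃ β γ : ℝ, 0 < β ∧ β < 1 ∧ 0 < γ ∧ γ < 1 ∧
      1 ≤ 2^(112*D) * (β^(cc i) * (1-β)^(ee i) * γ^(dd i) * (1-γ)^(ff i))^64 :=
    fun i => PC hD1 (hce i) (hdf i) (hsum i) (hcd i)
  choose β γ hβ0 hβ1 hγ0 hγ1 hkey using hPC
  -- weight functions on pairs
  set Fm : (Finset (Fin n) × Finset (Fin n)) → ℝ :=
    fun p => ∏ i, (if i ∈ p.1 ∩ p.2 then β i else 1 - β i) with hFmdef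
  set Fj : (Finset (Fin n) × Finset (Fin n)) → ℝ :=
    fun p => ∏ i, (if i ∈ p.1 ∪ p.2 then 1 - γ i else γ i) with hFjdef
  have hFm_nonneg : ∀ p, 0 ≤ Fm p := by
    intro p
    apply Finset.prod_nonneg
    intro i _
    split_ifs
    · exact le_of_lt (hβ0 i)
    · linarith [hβ1 i]
  have hFj_nonneg : ∀ p, 0 ≤ Fj p := by
    intro p
    apply Finset.prod_nonneg
    intro i _
    split_ifs
    · linarith [hγ1 i]
    · exact le_of_lt (hγ0 i)
  -- sum bounds
  have hFm_sum : ∑ p ∈ S, Fm p ≤ 2 := by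
    have hg : ∀ s : Finset (Fin n), 0 ≤ ∏ i, (if i ∈ s then β i else 1 - β i) := by
      intro s
      apply Finset.prod_nonneg
      intro i _
      split_ifs
      · exact le_of_lt (hβ0 i)
      · linarith [hβ1 i]
    have h1 := sum_comp_le S (fun p => p.1 ∩ p.2)
      (fun s => ∏ i, (if i ∈ s then β i else 1 - β i)) hg
      (fun s => by rw [hSdef]; exact fiber_le_two_meet hR s)
    have h2 := sum_weights β (fun i => 1 - β i) (fun i => by ring)
    rw [h2, mul_one] at h1
    exact h1
  have hFj_sum : ∑ p ∈ S, Fj p ≤ 2 := by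
    have hg : ∀ s : Finset (Fin n), 0 ≤ ∏ i, (if i ∈ s then 1 - γ i else γ i) := by
      intro s
      apply Finset.prod_nonneg
      intro i _
      split_ifs
      · linarith [hγ1 i]
      · exact le_of_lt (hγ0 i)
    have h1 := sum_comp_le S (fun p => p.1 ∪ p.2)
      (fun s => ∏ i, (if i ∈ s then 1 - γ i else γ i)) hg
      (fun s => by rw [hSdef]; exact fiber_le_two_join hR s)
    have h2 := sum_weights (fun i => 1 - γ i) γ (fun i => by ring)
    rw [h2, mul_one] at h1
    exact h1
  -- AM-GM
  have hP1 : ∏ p ∈ S, Fm p ≤ (2/(D:ℝ))^D :=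
    prod_le_of_sum_le S hSne Fm (fun p _ => hFm_nonneg p) hFm_sum
  have hP2 : ∏ p ∈ S, Fj p ≤ (2/(D:ℝ))^D :=
    prod_le_of_sum_le S hSne Fj (fun p _ => hFj_nonneg p) hFj_sum
  -- product identities
  have hPm : ∏ p ∈ S, Fm p = ∏ i, (β i)^(cc i) * (1 - β i)^(ee i) :=
    prod_weights S (fun p => p.1 ∩ p.2) β (fun i => 1 - β i)
  have hffeq : ∀ i, (S.filter (fun p => i ∈ p.1 ∪ p.2)).card = ff i := by
    intro i
    rw [hffdef]
    congr 1
    apply Finset.filter_congr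
    intro p _
    simp only [Finset.mem_union, not_not]
  have hPj : ∏ p ∈ S, Fj p = ∏ i, (1 - γ i)^(ff i) * (γ i)^(dd i) := by
    rw [prod_weights S (fun p => p.1 ∪ p.2) (fun i => 1 - γ i) γ]
    apply Finset.prod_congr rfl
    intro i _
    rw [hffeq i]
  -- combine the per-coordinate keys
  have hbig : (1:ℝ) ≤ ∏ i, ((2:ℝ)^(112*D)
      * (β i^(cc i) * (1-β i)^(ee i) * γ i^(dd i) * (1-γ i)^(ff i))^64) := by
    refine le_trans (le_of_eq (Finset.prod_const_one (s := (univ : Finset (Fin n)))).symm) ?_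
    exact Finset.prod_le_prod (fun i _ => by norm_num) (fun i _ => hkey i)
  have hsplit : ∏ i, ((2:ℝ)^(112*D)
        * (β i^(cc i) * (1-β i)^(ee i) * γ i^(dd i) * (1-γ i)^(ff i))^64)
      = (2:ℝ)^(112*D*n) * ((∏ p ∈ S, Fm p) * (∏ p ∈ S, Fj p))^64 := by
    have hXX : ∏ i, (β i^(cc i) * (1-β i)^(ee i) * γ i^(dd i) * (1-γ i)^(ff i))
        = (∏ p ∈ S, Fm p) * (∏ p ∈ S, Fj p) := by
      calc ∏ i, (β i^(cc i) * (1-β i)^(ee i) * γ i^(dd i) * (1-γ i)^(ff i))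
            = ∏ i, ((β i^(cc i) * (1-β i)^(ee i)) * ((1-γ i)^(ff i) * γ i^(dd i))) :=
              Finset.prod_congr rfl (fun i _ => by ring)
          _ = (∏ i, β i^(cc i) * (1-β i)^(ee i)) * (∏ i, (1-γ i)^(ff i) * γ i^(dd i)) :=
              Finset.prod_mul_distrib
          _ = (∏ p ∈ S, Fm p) * (∏ p ∈ S, Fj p) := by rw [hPm, hPj]
    rw [Finset.prod_mul_distrib, Finset.prod_const, Finset.card_univ, Fintype.card_fin,
      ← pow_mul, Finset.prod_pow, hXX]
  rw [hsplit] at hbig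
  have hProdFm : 0 ≤ ∏ p ∈ S, Fm p := Finset.prod_nonneg (fun p _ => hFm_nonneg p)
  have hProdFj : 0 ≤ ∏ p ∈ S, Fj p := Finset.prod_nonneg (fun p _ => hFj_nonneg p)
  have hD0 : (0:ℝ) < ((D:ℕ):ℝ) := by exact_mod_cast hD1
  have hfinal : (1:ℝ) ≤ 2^(112*D*n) * ((2/((D:ℕ):ℝ))^D * (2/((D:ℕ):ℝ))^D)^64 := by
    refine hbig.trans ?_
    apply mul_le_mul_of_nonneg_left _ (by positivity)
    apply pow_le_pow_left₀ (mul_nonneg hProdFm hProdFj)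
    exact mul_le_mul hP1 hP2 hProdFj (by positivity)
  have hcomb : ((2/((D:ℕ):ℝ))^D * (2/((D:ℕ):ℝ))^D)^64 = (2/((D:ℕ):ℝ))^(128*D) := by
    rw [← pow_add, ← pow_mul]
    congr 1
    ring
  rw [hcomb, div_pow, mul_div_assoc'] at hfinal
  rw [le_div_iff₀ (by positivity), one_mul] at hfinal
  -- hfinal : (D:ℝ)^(128*D) ≤ 2^(112*D*n) * 2^(128*D)
  have hexp : (2:ℝ)^(112*D*n) * 2^(128*D) = ((2:ℝ)^(112*n+128))^D := by
    rw [← pow_add, ← pow_mul]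
    congr 1
    ring
  rw [hexp] at hfinal
  have hWD : (((D:ℕ):ℝ))^(128*D) = ((((D:ℕ):ℝ))^128)^D := by
    rw [← pow_mul]
  rw [hWD] at hfinal
  -- strip the D-th power
  by_contra hcon
  push_neg at hcon
  have h2pos : (0:ℝ) ≤ 2^(112*n+128) := by positivity
  have := pow_lt_pow_left₀ hcon h2pos (Nat.one_le_iff_ne_zero.mp hD1)
  linarith


lemma sqrt3_sq : (Real.sqrt 3)^(2:ℕ) = 3 := Real.sq_sqrt (by norm_num)

lemma rpow_pow (q : ℝ) (k : ℕ) : ((2:ℝ)^(q:ℝ))^(k:ℕ) = (2:ℝ)^(q*k) := by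
  rw [← Real.rpow_natCast ((2:ℝ)^(q:ℝ)) k, ← Real.rpow_mul (by norm_num : (0:ℝ) ≤ 2)]

lemma rpow_mono {a b : ℝ} (h : a ≤ b) : (2:ℝ)^(a:ℝ) ≤ (2:ℝ)^(b:ℝ) :=
  Real.rpow_le_rpow_left_iff (by norm_num : (1:ℝ) < 2) |>.mpr h

lemma rpow_one_le {a : ℝ} (h : 0 ≤ a) : (1:ℝ) ≤ (2:ℝ)^(a:ℝ) := by
  have := rpow_mono h
  rwa [Real.rpow_zero] at this

lemma card_le_pow : R.card ≤ 2^n := by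
  calc R.card ≤ Fintype.card (Finset (Fin n)) := Finset.card_le_univ R |>.trans_eq
        (Finset.card_univ)
    _ = 2^n := by rw [Fintype.card_finset, Fintype.card_fin]


end RecAux

open RecAux in
theorem recovering_set_card_bound {n : ℕ} (R : Finset (Finset (Fin n)))
    (hR : IsRecovering R) :
    (R.card : ℝ) ≤ Real.sqrt 3 * 2 ^ ((0.4392 : ℝ) * n) := by
  have hs3 : (1:ℝ) ≤ Real.sqrt 3 := by
    rw [show (1:ℝ) = Real.sqrt 1 from (Real.sqrt_one).symm]
    exact Real.sqrt_le_sqrt (by norm_num)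
  have hrpos : (0:ℝ) ≤ (2:ℝ)^((0.4392:ℝ)*n) := Real.rpow_nonneg (by norm_num) _
  rcases le_or_gt R.card 1 with h1 | h1
  · have h1' : (R.card : ℝ) ≤ 1 := by exact_mod_cast h1
    have hr1 : (1:ℝ) ≤ (2:ℝ)^((0.4392:ℝ)*n) := rpow_one_le (by positivity)
    nlinarith
  rcases lt_or_ge R.card 4 with h4 | h4
  · -- R.card ∈ {2, 3}
    have hNle : R.card ≤ 2^n := card_le_pow
    interval_cases hh : R.card
    · -- card = 2
      have hn1 : 1 ≤ n := by
        by_contra hc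
        push_neg at hc
        interval_cases n <;> omega
      have e1 : (1/4 : ℝ) ≤ (0.4392:ℝ)*n := by
        have : (1:ℝ) ≤ (n:ℝ) := by exact_mod_cast hn1
        nlinarith
      have key : (2:ℝ) ≤ Real.sqrt 3 * (2:ℝ)^((1/4:ℝ)) := by
        have h4th : ((2:ℝ))^(4:ℕ) ≤ (Real.sqrt 3 * (2:ℝ)^((1/4:ℝ)))^(4:ℕ) := by
          rw [mul_pow]
          have hs : (Real.sqrt 3)^(4:ℕ) = 9 := by
            rw [show (4:ℕ) = 2*2 from rfl, pow_mul, sqrt3_sq]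
            norm_num
          have hr : ((2:ℝ)^((1/4:ℝ)))^(4:ℕ) = 2 := by
            rw [rpow_pow]
            norm_num
          rw [hs, hr]
          norm_num
        exact le_of_pow_le_pow_left₀ (by norm_num) (by positivity) h4th
      calc ((2:ℕ) : ℝ) ≤ Real.sqrt 3 * (2:ℝ)^((1/4:ℝ)) := by exact_mod_cast key
        _ ≤ Real.sqrt 3 * (2:ℝ)^((0.4392:ℝ)*n) := by
            exact mul_le_mul_of_nonneg_left (rpow_mono e1) (Real.sqrt_nonneg 3)
    · -- card = 3
      have hn2 : 2 ≤ n := by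
        by_contra hc
        push_neg at hc
        interval_cases n <;> omega
      have e1 : (7/8 : ℝ) ≤ (0.4392:ℝ)*n := by
        have : (2:ℝ) ≤ (n:ℝ) := by exact_mod_cast hn2
        nlinarith
      have key : (3:ℝ) ≤ Real.sqrt 3 * (2:ℝ)^((7/8:ℝ)) := by
        have h8th : ((3:ℝ))^(8:ℕ) ≤ (Real.sqrt 3 * (2:ℝ)^((7/8:ℝ)))^(8:ℕ) := by
          rw [mul_pow]
          have hs : (Real.sqrt 3)^(8:ℕ) = 81 := by
            rw [show (8:ℕ) = 2*4 from rfl, pow_mul, sqrt3_sq]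
            norm_num
          have hr : ((2:ℝ)^((7/8:ℝ)))^(8:ℕ) = 128 := by
            rw [rpow_pow, show (7/8*((8:ℕ):ℝ) : ℝ) = ((7:ℕ):ℝ) by push_cast; ring,
              Real.rpow_natCast]
            norm_num
          rw [hs, hr]
          norm_num
        exact le_of_pow_le_pow_left₀ (by norm_num) (by positivity) h8th
      calc ((3:ℕ) : ℝ) ≤ Real.sqrt 3 * (2:ℝ)^((7/8:ℝ)) := by exact_mod_cast key
        _ ≤ Real.sqrt 3 * (2:ℝ)^((0.4392:ℝ)*n) := by
            exact mul_le_mul_of_nonneg_left (rpow_mono e1) (Real.sqrt_nonneg 3)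
  · -- R.card ≥ 4 : the main machine
    have hm := machine hR (by omega)
    have hoffcard : (R.offDiag.card : ℕ) = R.card * R.card - R.card := Finset.offDiag_card R
    have hW : ((R.offDiag.card : ℕ) : ℝ) = (R.card:ℝ)*(R.card:ℝ) - (R.card:ℝ) := by
      rw [hoffcard]
      push_cast [Nat.cast_sub (le_mul_self R.card)]
      ring
    have hN4 : (4:ℝ) ≤ (R.card:ℝ) := by exact_mod_cast h4
    have hNN : ((R.card:ℝ))^(2:ℕ) ≤ (4/3) * ((R.offDiag.card : ℕ) : ℝ) := by
      rw [hW]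
      nlinarith
    -- 256th powers
    have hLHS : ((R.card:ℝ))^(256:ℕ) ≤ (4/3)^(128:ℕ) * 2^(112*n+128) := by
      calc ((R.card:ℝ))^(256:ℕ) = (((R.card:ℝ))^(2:ℕ))^(128:ℕ) := by
            rw [← pow_mul]
        _ ≤ ((4/3) * ((R.offDiag.card : ℕ) : ℝ))^(128:ℕ) := by
            apply pow_le_pow_left₀ (by positivity) hNN
        _ = (4/3)^(128:ℕ) * (((R.offDiag.card : ℕ) : ℝ))^(128:ℕ) := mul_pow _ _ _
        _ ≤ (4/3)^(128:ℕ) * 2^(112*n+128) := by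
            exact mul_le_mul_of_nonneg_left hm (by positivity)
    have hRHS : (4/3:ℝ)^(128:ℕ) * 2^(112*n+128)
        ≤ (Real.sqrt 3 * (2:ℝ)^((0.4392:ℝ)*n))^(256:ℕ) := by
      rw [mul_pow]
      have hs : (Real.sqrt 3)^(256:ℕ) = 3^(128:ℕ) := by
        rw [show (256:ℕ) = 2*128 from rfl, pow_mul, sqrt3_sq]
      have hr : ((2:ℝ)^((0.4392:ℝ)*n))^(256:ℕ) = (2:ℝ)^((112.4352:ℝ)*n) := by
        rw [rpow_pow]
        congr 1
        push_cast
        ring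
      rw [hs, hr]
      have hsplit : (2:ℝ)^((112.4352:ℝ)*n) = (2:ℝ)^((112*n:ℕ):ℝ) * (2:ℝ)^((0.4352:ℝ)*n) := by
        rw [← Real.rpow_add (by norm_num : (0:ℝ) < 2)]
        congr 1
        push_cast
        ring
      have h2n : (2:ℝ)^((112*n:ℕ):ℝ) = (2:ℝ)^(112*n:ℕ) := Real.rpow_natCast 2 (112*n)
      have hone : (1:ℝ) ≤ (2:ℝ)^((0.4352:ℝ)*n) := rpow_one_le (by positivity)
      have hpow_add : (2:ℝ)^(112*n+128:ℕ) = (2:ℝ)^(112*n:ℕ) * 2^(128:ℕ) := pow_add 2 _ _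
      rw [hsplit, h2n, hpow_add]
      have hcore : (4/3:ℝ)^(128:ℕ) * 2^(128:ℕ) ≤ 3^(128:ℕ) := by
        have h0 : ((4/3:ℝ)*2)^(128:ℕ) ≤ (3:ℝ)^(128:ℕ) :=
          pow_le_pow_left₀ (by norm_num) (by norm_num) 128
        rwa [mul_pow] at h0
      calc (4/3:ℝ)^(128:ℕ) * ((2:ℝ)^(112*n:ℕ) * 2^(128:ℕ))
          = ((4/3:ℝ)^(128:ℕ) * 2^(128:ℕ)) * (2:ℝ)^(112*n:ℕ) := by ring
        _ ≤ 3^(128:ℕ) * (2:ℝ)^(112*n:ℕ) := by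
            exact mul_le_mul_of_nonneg_right hcore (by positivity)
        _ ≤ 3^(128:ℕ) * ((2:ℝ)^(112*n:ℕ) * (2:ℝ)^((0.4352:ℝ)*n)) := by
            nlinarith [pow_pos (show (0:ℝ) < 2 by norm_num) (112*n),
              pow_pos (show (0:ℝ) < 3 by norm_num) 128, hone,
              mul_pos (pow_pos (show (0:ℝ) < 3 by norm_num) 128)
                (pow_pos (show (0:ℝ) < 2 by norm_num) (112*n))]
    exact le_of_pow_le_pow_left₀ (by norm_num) (by positivity) (hLHS.trans hRHS)
end

section
/- If R is a recovering set in the Boolean lattice B_n and the random variable ξ = a ∩ b where a, b are chosen independently and uniformly from R, then the binary entropy H(ξ) ≥ log₂(|R|²/3). -/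
/-- The probability that the intersection of two independent uniform elements of `R`
equals `a`. -/
noncomputable def interProb {n : ℕ} (R : Finset (Finset (Fin n))) (a : Finset (Fin n)) : ℝ :=
  (((R ×ˢ R).filter (fun p => p.1 ∩ p.2 = a)).card : ℝ) / (R.card : ℝ) ^ 2

lemma fiber_le_three {n : ℕ} (R : Finset (Finset (Fin n))) (hR : IsRecovering R)
    (a : Finset (Fin n)) :
    ((R ×ˢ R).filter (fun p => p.1 ∩ p.2 = a)).card ≤ 3 := by
  set F := (R ×ˢ R).filter (fun p => p.1 ∩ p.2 = a) with hF
  have hmem : ∀ p ∈ F, p.1 ∈ R ∧ p.2 ∈ R ∧ p.1 ∩ p.2 = a := by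
    intro p hp
    simp only [hF, Finset.mem_filter, Finset.mem_product] at hp
    exact ⟨hp.1.1, hp.1.2, hp.2⟩
  by_cases h : ∃ p ∈ F, p.1 ≠ p.2
  · obtain ⟨⟨u, v⟩, huvF, huv⟩ := h
    simp only [ne_eq] at huv
    obtain ⟨hu, hv, huva⟩ := hmem _ huvF
    have hsub : F ⊆ {(a, a), (u, v), (v, u)} := by
      intro ⟨x, y⟩ hxy
      obtain ⟨hx, hy, hxya⟩ := hmem _ hxy
      simp only [Finset.mem_insert, Finset.mem_singleton, Prod.mk.injEq]
      rcases eq_or_ne x y with rfl | hxney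
      · left
        have : x = a := by rw [← hxya]; simp
        exact ⟨this, this⟩
      rcases eq_or_ne x u with rfl | hxu
      · rcases eq_or_ne y v with rfl | hyv
        · right; left; exact ⟨rfl, rfl⟩
        · exact absurd (hxya.trans huva.symm)
            (Ne.symm (hR.2 x hx v hv y hy huv hxney (Ne.symm hyv)).1)
      rcases eq_or_ne x v with rfl | hxv
      · rcases eq_or_ne y u with rfl | hyu
        · right; right; exact ⟨rfl, rfl⟩
        · have := (hR.2 x hx u hu y hy (Ne.symm huv) hxney (Ne.symm hyu)).1
          rw [Finset.inter_comm x u] at this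
          exact absurd (huva.trans hxya.symm) this
      rcases eq_or_ne y u with rfl | hyu
      · have := (hR.2 y hy v hv x hx huv (Ne.symm hxney) (Ne.symm hxv)).1
        rw [Finset.inter_comm y x] at this
        exact absurd (huva.trans hxya.symm) this
      rcases eq_or_ne y v with rfl | hyv
      · have := (hR.2 y hy u hu x hx (Ne.symm huv) (Ne.symm hxney) (Ne.symm hxu)).1
        rw [Finset.inter_comm y u, Finset.inter_comm y x] at this
        exact absurd (huva.trans hxya.symm) this
      · exact absurd (hxya.trans huva.symm)
          (hR.1 x hx y hy u hu v hv hxney hxu hxv hyu hyv huv).1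
    calc F.card ≤ ({(a, a), (u, v), (v, u)} : Finset _).card := Finset.card_le_card hsub
      _ ≤ 3 := by
        apply le_trans (Finset.card_insert_le _ _)
        have := Finset.card_insert_le (u, v) ({(v, u)} : Finset _)
        simp only [Finset.card_singleton] at this
        omega
  · push_neg at h
    have hsub : F ⊆ {(a, a)} := by
      intro ⟨x, y⟩ hxy
      obtain ⟨hx, hy, hxya⟩ := hmem _ hxy
      have hd : x = y := h _ hxy
      subst hd
      have : x = a := by rw [← hxya]; simp
      simp [this]
    calc F.card ≤ 1 := by simpa using Finset.card_le_card hsub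
      _ ≤ 3 := by omega

theorem entropy_inter_ge {n : ℕ} (R : Finset (Finset (Fin n)))
    (hR : IsRecovering R) (hne : R.Nonempty) :
    Real.logb 2 ((R.card : ℝ) ^ 2 / 3) ≤
      ∑ a ∈ (R ×ˢ R).image (fun p => p.1 ∩ p.2),
        interProb R a * Real.logb 2 (1 / interProb R a) := by
  have hN : 0 < (R.card : ℝ) := by exact_mod_cast Finset.card_pos.mpr hne
  have hN2 : 0 < (R.card : ℝ) ^ 2 := by positivity
  set S := (R ×ˢ R).image (fun p => p.1 ∩ p.2) with hS
  -- sum of probabilities is 1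
  have hsum : ∑ a ∈ S, interProb R a = 1 := by
    have hcard : (R ×ˢ R).card = ∑ a ∈ S, ((R ×ˢ R).filter (fun p => p.1 ∩ p.2 = a)).card :=
      Finset.card_eq_sum_card_fiberwise (fun p hp => Finset.mem_image_of_mem _ hp)
    unfold interProb
    rw [← Finset.sum_div]
    rw [div_eq_one_iff_eq (ne_of_gt hN2)]
    rw [← Nat.cast_sum, ← hcard]
    rw [Finset.card_product]
    push_cast
    ring
  have hpos : ∀ a ∈ S, 0 < interProb R a := by
    intro a ha
    obtain ⟨p, hp, hpa⟩ := Finset.mem_image.mp ha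
    have : ((R ×ˢ R).filter (fun q => q.1 ∩ q.2 = a)).Nonempty := ⟨p, Finset.mem_filter.mpr ⟨hp, hpa⟩⟩
    have hc : 0 < (((R ×ˢ R).filter (fun q => q.1 ∩ q.2 = a)).card : ℝ) := by
      exact_mod_cast Finset.card_pos.mpr this
    exact div_pos hc hN2
  have hle : ∀ a ∈ S, interProb R a ≤ 3 / (R.card : ℝ) ^ 2 := by
    intro a _
    unfold interProb
    gcongr
    exact_mod_cast fiber_le_three R hR a
  calc Real.logb 2 ((R.card : ℝ) ^ 2 / 3)
      = ∑ a ∈ S, interProb R a * Real.logb 2 ((R.card : ℝ) ^ 2 / 3) := by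
        rw [← Finset.sum_mul, hsum, one_mul]
    _ ≤ ∑ a ∈ S, interProb R a * Real.logb 2 (1 / interProb R a) := by
        apply Finset.sum_le_sum
        intro a ha
        apply mul_le_mul_of_nonneg_left ?_ (le_of_lt (hpos a ha))
        apply Real.logb_le_logb_of_le one_lt_two (by positivity)
        calc (R.card : ℝ) ^ 2 / 3 = 1 / (3 / (R.card : ℝ) ^ 2) := by
              rw [one_div_div]
          _ ≤ 1 / interProb R a := one_div_le_one_div_of_le (hpos a ha) (hle a ha)
end

section
/- For the binary entropy function h(x) = x log₂(1/x) + (1−x) log₂(1/(1−x)) (with h(0)=h(1)=0), the maximum over x ∈ [0,1] of h(x²) + h((1−x)²) is at most 1.7568, i.e., for all x ∈ [0,1], h(x²) + h((1−x)²) ≤ 1.7568. -/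
open Real Set

/-- The binary entropy function (with `h 0 = h 1 = 0`, since `Real.logb 2 0 = 0`). -/
noncomputable def binEnt (x : ℝ) : ℝ :=
  -(x * Real.logb 2 x) - (1 - x) * Real.logb 2 (1 - x)


/-- `log t ≥ (t-1) - (t-1)^2/2` for `t ≥ 1`. -/
lemma aux_log_ge (t : ℝ) (ht : 1 ≤ t) : (t-1) - (t-1)^2/2 ≤ Real.log t := by
  set f : ℝ → ℝ := fun s => Real.log s - (s-1) + (s-1)^2/2 with hf
  have key : MonotoneOn f (Ici 1) := by
    apply monotoneOn_of_deriv_nonneg (convex_Ici 1)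
    · apply ContinuousOn.add
      apply ContinuousOn.sub
      · exact Real.continuousOn_log.mono (by intro s hs; simp at hs ⊢; positivity)
      · fun_prop
      · fun_prop
    · intro s hs
      rw [interior_Ici] at hs
      have hs0 : (0:ℝ) < s := lt_trans one_pos hs
      apply DifferentiableAt.differentiableWithinAt
      apply DifferentiableAt.add
      apply DifferentiableAt.sub
      · exact Real.differentiableAt_log (ne_of_gt hs0)
      · fun_prop
      · fun_prop
    · intro s hs
      rw [interior_Ici] at hs
      have hs0 : (0:ℝ) < s := lt_trans one_pos hs
      have hd : HasDerivAt f (1/s - 1 + (s-1)) s := by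
        have h1 : HasDerivAt (fun s : ℝ => Real.log s) (1/s) s := by
          simpa [one_div] using Real.hasDerivAt_log (ne_of_gt hs0)
        have h2 : HasDerivAt (fun s : ℝ => (s-1)) 1 s := by
          simpa using (hasDerivAt_id s).sub_const 1
        have h3 : HasDerivAt (fun s : ℝ => (s-1)^2/2) (s-1) s := by
          have := (h2.pow 2).div_const 2
          exact this.congr_deriv (by push_cast; ring)
        exact (h1.sub h2).add h3
      rw [hd.deriv]
      have : 1/s - 1 + (s-1) = (s-1)^2/s := by field_simp; ring
      rw [this]; positivity
  have h01 : f 1 ≤ f t := key (by simp) (by simpa using ht) ht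
  simp only [hf] at h01
  simp at h01
  nlinarith [h01]

/-- `t log t ≥ (t-1) + (t-1)^2/2 - (t-1)^3/6` for `t ≥ 1`. -/
lemma aux_mul_log_ge_of_one_le (t : ℝ) (ht : 1 ≤ t) :
    (t-1) + (t-1)^2/2 - (t-1)^3/6 ≤ t * Real.log t := by
  set f : ℝ → ℝ := fun s => s * Real.log s - (s-1) - (s-1)^2/2 + (s-1)^3/6 with hf
  have key : MonotoneOn f (Ici 1) := by
    apply monotoneOn_of_deriv_nonneg (convex_Ici 1)
    · apply ContinuousOn.add
      apply ContinuousOn.sub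
      apply ContinuousOn.sub
      · exact (continuousOn_id).mul
          (Real.continuousOn_log.mono (by intro s hs; simp at hs ⊢; positivity))
      · fun_prop
      · fun_prop
      · fun_prop
    · intro s hs
      rw [interior_Ici] at hs
      have hs0 : (0:ℝ) < s := lt_trans one_pos hs
      apply DifferentiableAt.differentiableWithinAt
      apply DifferentiableAt.add
      apply DifferentiableAt.sub
      apply DifferentiableAt.sub
      · exact (differentiableAt_id).mul (Real.differentiableAt_log (ne_of_gt hs0))
      · fun_prop
      · fun_prop
      · fun_prop
    · intro s hs
      rw [interior_Ici] at hs
      have hs0 : (0:ℝ) < s := lt_trans one_pos hs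
      have hd : HasDerivAt f (Real.log s + 1 - 1 - (s-1) + (s-1)^2/2) s := by
        have hlog : HasDerivAt (fun s : ℝ => Real.log s) (1/s) s := by
          simpa [one_div] using Real.hasDerivAt_log (ne_of_gt hs0)
        have h1 : HasDerivAt (fun s : ℝ => s * Real.log s) (Real.log s + 1) s := by
          have := (hasDerivAt_id s).mul hlog
          exact this.congr_deriv (by simp [hs0.ne'])
        have h2 : HasDerivAt (fun s : ℝ => (s-1)) 1 s := by
          simpa using (hasDerivAt_id s).sub_const 1
        have h3 : HasDerivAt (fun s : ℝ => (s-1)^2/2) (s-1) s := by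
          have := (h2.pow 2).div_const 2
          exact this.congr_deriv (by push_cast; ring)
        have h4 : HasDerivAt (fun s : ℝ => (s-1)^3/6) ((s-1)^2/2) s := by
          have := (h2.pow 3).div_const 6
          exact this.congr_deriv (by push_cast; ring)
        exact ((h1.sub h2).sub h3).add h4
      rw [hd.deriv]
      have := aux_log_ge s (le_of_lt hs)
      nlinarith [this]
  have h01 : f 1 ≤ f t := key (by simp) (by simpa using ht) ht
  simp only [hf] at h01
  simp at h01
  nlinarith [h01]

/-- `t log t ≥ (t-1) + (t-1)^2/2` for `0 ≤ t ≤ 1`. -/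
lemma aux_mul_log_ge_of_le_one (t : ℝ) (ht0 : 0 ≤ t) (ht1 : t ≤ 1) :
    (t-1) + (t-1)^2/2 ≤ t * Real.log t := by
  rcases eq_or_lt_of_le ht0 with h0 | h0
  · rw [← h0]; norm_num
  set f : ℝ → ℝ := fun s => s * Real.log s - (s-1) - (s-1)^2/2 with hf
  have key : AntitoneOn f (Icc t 1) := by
    apply antitoneOn_of_deriv_nonpos (convex_Icc t 1)
    · apply ContinuousOn.sub
      apply ContinuousOn.sub
      · apply (continuousOn_id).mul
          (Real.continuousOn_log.mono ?_)
        intro s hs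
        simp at hs ⊢
        exact ne_of_gt (lt_of_lt_of_le h0 hs.1)
      · fun_prop
      · fun_prop
    · intro s hs
      rw [interior_Icc] at hs
      have hs0 : (0:ℝ) < s := lt_trans h0 hs.1
      apply DifferentiableAt.differentiableWithinAt
      apply DifferentiableAt.sub
      apply DifferentiableAt.sub
      · exact (differentiableAt_id).mul (Real.differentiableAt_log (ne_of_gt hs0))
      · fun_prop
      · fun_prop
    · intro s hs
      rw [interior_Icc] at hs
      have hs0 : (0:ℝ) < s := lt_trans h0 hs.1
      have hd : HasDerivAt f (Real.log s + 1 - 1 - (s-1)) s := by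
        have hlog : HasDerivAt (fun s : ℝ => Real.log s) (1/s) s := by
          simpa [one_div] using Real.hasDerivAt_log (ne_of_gt hs0)
        have h1 : HasDerivAt (fun s : ℝ => s * Real.log s) (Real.log s + 1) s := by
          have := (hasDerivAt_id s).mul hlog
          exact this.congr_deriv (by simp [hs0.ne'])
        have h2 : HasDerivAt (fun s : ℝ => (s-1)) 1 s := by
          simpa using (hasDerivAt_id s).sub_const 1
        have h3 : HasDerivAt (fun s : ℝ => (s-1)^2/2) (s-1) s := by
          have := (h2.pow 2).div_const 2
          exact this.congr_deriv (by push_cast; ring)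
        exact (h1.sub h2).sub h3
      rw [hd.deriv]
      have := Real.log_le_sub_one_of_pos hs0
      nlinarith [this]
  have h01 : f 1 ≤ f t := key (left_mem_Icc.mpr ht1) (right_mem_Icc.mpr ht1) ht1
  simp only [hf] at h01
  simp at h01
  nlinarith [h01]

/-- Pinsker-style inequality for the sum. -/
lemma aux_G (u : ℝ) (hu0 : 0 ≤ u) (hu1 : u ≤ 1) :
    (5/6) * u^2 ≤ (1+u) * Real.log (1+u) + (1-u) * Real.log (1-u) := by
  have h1 := aux_mul_log_ge_of_one_le (1+u) (by linarith)
  have h2 := aux_mul_log_ge_of_le_one (1-u) (by linarith) (by linarith)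
  have hcube : u^3 ≤ u^2 := by nlinarith
  nlinarith [h1, h2]

/-- The quadratic upper bound for natural-log entropy. -/
lemma aux_ent_nat (p : ℝ) (hp0 : 0 ≤ p) (hp1 : p ≤ 1) :
    -(p * Real.log p) - (1-p) * Real.log (1-p) ≤ Real.log 2 - (5/3) * (p - 1/2)^2 := by
  -- symmetric reduction
  have main : ∀ q : ℝ, 0 ≤ q → q ≤ 1/2 →
      -(q * Real.log q) - (1-q) * Real.log (1-q) ≤ Real.log 2 - (5/3) * (q - 1/2)^2 := by
    intro q hq0 hq12
    rcases eq_or_lt_of_le hq0 with h0 | h0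
    · rw [← h0]
      simp
      have := Real.log_two_gt_d9
      nlinarith [this]
    · have hq1 : q < 1 := by linarith
      have hG := aux_G (1 - 2*q) (by linarith) (by linarith)
      have e1 : (1 : ℝ) + (1 - 2*q) = 2 * (1-q) := by ring
      have e2 : (1 : ℝ) - (1 - 2*q) = 2 * q := by ring
      rw [e1, e2] at hG
      rw [Real.log_mul (by norm_num) (by linarith), Real.log_mul (by norm_num) (ne_of_gt h0)]
        at hG
      nlinarith [hG]
  rcases le_total p (1/2) with h | h
  · exact main p hp0 h
  · have := main (1-p) (by linarith) (by linarith)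
    have e : (1:ℝ) - (1-p) = p := by ring
    rw [e] at this
    nlinarith [this]

/-- The quadratic upper bound for `binEnt`. -/
lemma binEnt_le_quad (p : ℝ) (hp0 : 0 ≤ p) (hp1 : p ≤ 1) :
    binEnt p ≤ 1 - (5/3) * (p - 1/2)^2 / Real.log 2 := by
  have hlog2 : (0:ℝ) < Real.log 2 := Real.log_pos (by norm_num)
  have h := aux_ent_nat p hp0 hp1
  have hb : binEnt p = (-(p * Real.log p) - (1-p) * Real.log (1-p)) / Real.log 2 := by
    unfold binEnt
    rw [Real.logb, Real.logb]
    field_simp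
  rw [hb]
  rw [div_le_iff₀ hlog2]
  calc -(p * Real.log p) - (1-p) * Real.log (1-p)
      ≤ Real.log 2 - (5/3) * (p - 1/2)^2 := h
    _ = (1 - (5/3) * (p - 1/2)^2 / Real.log 2) * Real.log 2 := by field_simp

theorem binEnt_sq_add_le (x : ℝ) (hx : x ∈ Set.Icc (0 : ℝ) 1) :
    binEnt (x ^ 2) + binEnt ((1 - x) ^ 2) ≤ 1.7568 := by
  obtain ⟨hx0, hx1⟩ := hx
  have ha0 : (0:ℝ) ≤ x^2 := sq_nonneg x
  have ha1 : x^2 ≤ 1 := by nlinarith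
  have hb0 : (0:ℝ) ≤ (1-x)^2 := sq_nonneg _
  have hb1 : (1-x)^2 ≤ 1 := by nlinarith
  have h1 := binEnt_le_quad (x^2) ha0 ha1
  have h2 := binEnt_le_quad ((1-x)^2) hb0 hb1
  have hq : (1:ℝ)/8 ≤ (x^2 - 1/2)^2 + ((1-x)^2 - 1/2)^2 := by
    nlinarith [sq_nonneg (x - 1/2), sq_nonneg ((x-1/2)^2)]
  have hlog2 : (0:ℝ) < Real.log 2 := Real.log_pos (by norm_num)
  have hlt : Real.log 2 < 0.6931471808 := Real.log_two_lt_d9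
  have key : (5/3) * (x^2 - 1/2)^2 / Real.log 2 + (5/3) * ((1-x)^2 - 1/2)^2 / Real.log 2
      ≥ (5/3) * (1/8) / Real.log 2 := by
    rw [ge_iff_le, ← add_div, div_le_div_iff₀ hlog2 hlog2]
    nlinarith [hq, hlog2]
  have hfin : (5:ℝ)/3 * (1/8) / Real.log 2 ≥ 0.2432 := by
    rw [ge_iff_le, le_div_iff₀ hlog2]
    nlinarith [hlt, hlog2]
  linarith [h1, h2, key, hfin]
end

section
/- For any x ∈ [0,1] with x ≥ 6/11 or x ≤ 5/11, h(x²) + h((1−x)²) ≤ 1 + h(25/121), where h is the binary entropy function (base 2). -/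
lemma binEnt_eq (x : ℝ) : binEnt x = Real.binEntropy x / Real.log 2 := by
  simp only [binEnt, Real.binEntropy, Real.logb, Real.log_inv]
  ring

lemma binEnt_le_one (x : ℝ) : binEnt x ≤ 1 := by
  rw [binEnt_eq, div_le_one (Real.log_pos (by norm_num))]
  exact Real.binEntropy_le_log_two

lemma binEnt_mono {a b : ℝ} (ha : 0 ≤ a) (hab : a ≤ b) (hb : b ≤ 2⁻¹) :
    binEnt a ≤ binEnt b := by
  rw [binEnt_eq, binEnt_eq]
  have := Real.binEntropy_strictMonoOn.monotoneOn ⟨ha, hab.trans hb⟩ ⟨ha.trans hab, hb⟩ hab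
  gcongr

theorem binEnt_sq_add_le_of_far (x : ℝ) (hx : x ∈ Set.Icc (0 : ℝ) 1)
    (h : 6 / 11 ≤ x ∨ x ≤ 5 / 11) :
    binEnt (x ^ 2) + binEnt ((1 - x) ^ 2) ≤ 1 + binEnt (25 / 121) := by
  obtain ⟨hx0, hx1⟩ := hx
  rcases h with h | h
  · have h1 : binEnt ((1 - x) ^ 2) ≤ binEnt (25 / 121) := by
      apply binEnt_mono (by positivity) (by nlinarith) (by norm_num)
    have h2 : binEnt (x ^ 2) ≤ 1 := binEnt_le_one _
    linarith
  · have h1 : binEnt (x ^ 2) ≤ binEnt (25 / 121) := by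
      apply binEnt_mono (by positivity) (by nlinarith) (by norm_num)
    have h2 : binEnt ((1 - x) ^ 2) ≤ 1 := binEnt_le_one _
    linarith
end

section
/- For any x ∈ [5/11, 6/11], h(x²) + h((1−x)²) ≤ 2·h(36/121), where h is the binary entropy function (base 2). -/
theorem binEnt_sq_add_le_of_middle (x : ℝ) (hx : x ∈ Set.Icc (5 / 11 : ℝ) (6 / 11)) :
    binEnt (x ^ 2) + binEnt ((1 - x) ^ 2) ≤ 2 * binEnt (36 / 121) := by
  obtain ⟨h1, h2⟩ := hx
  have e1 : binEnt (x ^ 2) ≤ binEnt (36 / 121) :=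
    binEnt_mono (sq_nonneg x) (by nlinarith) (by norm_num)
  have e2 : binEnt ((1 - x) ^ 2) ≤ binEnt (36 / 121) :=
    binEnt_mono (sq_nonneg _) (by nlinarith) (by norm_num)
  linarith
end

section
/- There exists a strongly cancellative set of size 2^{⌊n/2⌋} in the Boolean lattice B_n. Concretely, the family of all subsets s ⊆ {1,…,2⌊n/2⌋} that contain exactly one element from each block S_i = {2i−1, 2i} for 1 ≤ i ≤ ⌊n/2⌋ is a strongly cancellative set of size 2^{⌊n/2⌋}. -/
open Finset

/-- `C` is a strongly cancellative family of finite sets. -/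
def IsStronglyCancellative (C : Finset (Finset ℕ)) : Prop :=
  ∀ a1 ∈ C, ∀ a2 ∈ C, ∀ a3 ∈ C, a1 ≠ a2 → a1 ≠ a3 → a2 ≠ a3 →
    a1 ∩ a2 ≠ a1 ∩ a3 ∧ a1 ∪ a2 ≠ a1 ∪ a3

private def SF {m : ℕ} (f : Fin m → Bool) : Finset ℕ :=
  univ.image (fun i : Fin m => 2 * (i : ℕ) + 1 + (if f i then 1 else 0))

private lemma enc_mem_iff {m : ℕ} (f : Fin m → Bool) (i : Fin m) (b : Bool) :
    (2 * (i : ℕ) + 1 + (if b then 1 else 0)) ∈ SF f ↔ f i = b := by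
  simp only [SF, mem_image, mem_univ, true_and]
  constructor
  · rintro ⟨j, hj⟩
    have hij : (j : ℕ) = (i : ℕ) ∧ f j = b := by
      rcases Bool.eq_false_or_eq_true (f j) with h | h <;>
        rcases Bool.eq_false_or_eq_true b with h' | h' <;>
          simp [h, h'] at hj ⊢ <;> omega
    have : j = i := Fin.ext hij.1
    rw [← this]; exact hij.2
  · intro h
    exact ⟨i, by rw [h]⟩

private lemma sf_inj {m : ℕ} : Function.Injective (SF (m := m)) := by
  intro f g h
  funext i
  have h1 : (2 * (i : ℕ) + 1 + (if f i then 1 else 0)) ∈ SF f :=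
    (enc_mem_iff f i (f i)).mpr rfl
  rw [h] at h1
  exact ((enc_mem_iff g i (f i)).mp h1).symm

private lemma key {m : ℕ} (f g h : Fin m → Bool) (i : Fin m)
    (hfg : f i = g i) (hgh : g i ≠ h i) :
    SF f ∩ SF g ≠ SF f ∩ SF h ∧ SF f ∪ SF g ≠ SF f ∪ SF h := by
  constructor
  · intro e
    have hx : (2 * (i : ℕ) + 1 + (if g i then 1 else 0)) ∈ SF f ∩ SF g :=
      mem_inter.mpr ⟨(enc_mem_iff f i (g i)).mpr hfg, (enc_mem_iff g i (g i)).mpr rfl⟩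
    rw [e] at hx
    exact hgh ((enc_mem_iff h i (g i)).mp (mem_inter.mp hx).2).symm
  · intro e
    have hy : (2 * (i : ℕ) + 1 + (if h i then 1 else 0)) ∈ SF f ∪ SF h :=
      mem_union_right _ ((enc_mem_iff h i (h i)).mpr rfl)
    rw [← e] at hy
    rcases mem_union.mp hy with hy | hy
    · exact hgh (by rw [← hfg, (enc_mem_iff f i (h i)).mp hy])
    · exact hgh ((enc_mem_iff g i (h i)).mp hy)

theorem exists_strongly_cancellative_Bn (n : ℕ) :
    let m := n / 2
    -- the family of subsets containing exactly one element of each block {2i-1, 2i}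
    let C : Finset (Finset ℕ) :=
      (univ : Finset (Fin m → Bool)).image
        (fun f => univ.image (fun i : Fin m => 2 * (i : ℕ) + 1 + (if f i then 1 else 0)))
    (∀ s ∈ C, s ⊆ Finset.Icc 1 n) ∧ IsStronglyCancellative C ∧ C.card = 2 ^ m := by
  intro m C
  have hC : C = (univ : Finset (Fin m → Bool)).image (SF (m := m)) := rfl
  have hmn : 2 * m ≤ n := by
    have : m = n / 2 := rfl
    omega
  refine ⟨?_, ?_, ?_⟩
  · intro s hs
    rw [hC, mem_image] at hs
    obtain ⟨f, -, rfl⟩ := hs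
    intro x hx
    rw [SF, mem_image] at hx
    obtain ⟨i, -, rfl⟩ := hx
    have hi := i.isLt
    rcases Bool.eq_false_or_eq_true (f i) with h | h <;>
      simp [h, mem_Icc] <;> omega
  · intro a1 h1 a2 h2 a3 h3 _ _ h23
    rw [hC, mem_image] at h1 h2 h3
    obtain ⟨f, -, rfl⟩ := h1
    obtain ⟨g, -, rfl⟩ := h2
    obtain ⟨h, -, rfl⟩ := h3
    have hgh : g ≠ h := fun e => h23 (by rw [e])
    obtain ⟨i, hi⟩ : ∃ i, g i ≠ h i := by
      by_contra hc
      push_neg at hc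
      exact hgh (funext hc)
    by_cases hf : f i = g i
    · exact key f g h i hf hi
    · have hf' : f i = h i := by
        rcases Bool.eq_false_or_eq_true (f i) with a | a <;>
          rcases Bool.eq_false_or_eq_true (g i) with b | b <;>
            rcases Bool.eq_false_or_eq_true (h i) with c | c <;> simp_all
      have := key f h g i hf' (Ne.symm hi)
      exact ⟨fun e => this.1 e.symm, fun e => this.2 e.symm⟩
  · rw [hC, card_image_of_injective _ sf_inj, card_univ]
    simp
end

section
/- If real numbers N ≥ 1, k ≥ 1, l ≥ 2 satisfy N ≤ 2^{k/2} · l^{(k/2)(1 + 1/N)}, then N ≤ (2l)^{k/2} + k(l−1)/2. -/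
open Real

theorem analytic_step (N k l : ℝ) (hN : 1 ≤ N) (hk : 1 ≤ k) (hl : 2 ≤ l)
    (h : N ≤ 2 ^ (k / 2) * l ^ ((k / 2) * (1 + 1 / N))) :
    N ≤ (2 * l) ^ (k / 2) + k * (l - 1) / 2 := by
  by_contra hcon
  push_neg at hcon
  set A : ℝ := (2 * l) ^ (k / 2) with hA
  set B : ℝ := k * (l - 1) / 2 with hB
  have hl0 : (0:ℝ) < l := by linarith
  have h2l : (1:ℝ) ≤ 2 * l := by linarith
  have hA1 : (1:ℝ) ≤ A := Real.one_le_rpow h2l (by linarith)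
  have hB0 : k / 2 ≤ B := by
    rw [hB]; nlinarith
  have hk2 : (0:ℝ) < k / 2 := by linarith
  have hN1 : (0:ℝ) < A + B := by linarith
  have hNgt : A + B < N := hcon
  -- Step A : exponent monotonicity
  have hexp : l ^ ((k / 2) * (1 + 1 / N)) ≤ l ^ ((k / 2) * (1 + 1 / (A + B))) := by
    apply Real.rpow_le_rpow_of_exponent_le (by linarith)
    have : 1 / N ≤ 1 / (A + B) := by
      apply one_div_le_one_div_of_le hN1 hNgt.le
    nlinarith
  -- Step B : split the power
  have hsplit : (2:ℝ) ^ (k / 2) * l ^ ((k / 2) * (1 + 1 / (A + B)))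
      = A * l ^ (k / (2 * (A + B))) := by
    have he : (k / 2) * (1 + 1 / (A + B)) = k / 2 + k / (2 * (A + B)) := by
      field_simp
    rw [he, Real.rpow_add hl0, hA, Real.mul_rpow (by norm_num) hl0.le, mul_assoc]
  -- Step C : Bernoulli
  have hbern : l ^ (k / (2 * (A + B))) ≤ 1 + (k / (2 * (A + B))) * (l - 1) := by
    have := rpow_one_add_le_one_add_mul_self (s := l - 1) (by linarith)
      (p := k / (2 * (A + B))) (by positivity) ?_
    · simpa using this
    · rw [div_le_one (by linarith)]
      linarith
  -- Step D : combine
  have hAle : A ≤ A + B := by linarith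
  have hD : A * (1 + (k / (2 * (A + B))) * (l - 1)) ≤ A + B := by
    have h1 : A * ((k / (2 * (A + B))) * (l - 1)) ≤ B := by
      rw [div_mul_eq_mul_div, mul_div_assoc', div_le_iff₀ (by linarith)]
      rw [hB]
      nlinarith
    nlinarith
  have : N ≤ A + B := by
    calc N ≤ 2 ^ (k / 2) * l ^ ((k / 2) * (1 + 1 / N)) := h
      _ ≤ 2 ^ (k / 2) * l ^ ((k / 2) * (1 + 1 / (A + B))) := by
          apply mul_le_mul_of_nonneg_left hexp (by positivity)
      _ = A * l ^ (k / (2 * (A + B))) := hsplit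
      _ ≤ A * (1 + (k / (2 * (A + B))) * (l - 1)) := by
          apply mul_le_mul_of_nonneg_left hbern (by linarith)
      _ ≤ A + B := hD
  linarith
end
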